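/- Let L ≥ 2 be even, x₀ = L/2, B > 0 and v > 0. For t ∈ [0,1/v] let H(t) = H_0 − (1−vt)B S¹_{x₀} − vt B S¹_{x₀+1}, and let E₀(t) denote the lowest eigenvalue of H(t). Then E₀ attains its maximum over [0, 1/v] at the half period: E₀(1/(2v)) = max_{t ∈ [0,1/v]} E₀(t). -/

import Mathlib

open Matrix Finset
open scoped ComplexOrder

noncomputable section

/-- Configuration space of a chain of `L` spins-1/2: `ℋ_L = ⊗_{x=1}^L ℂ²`
is identified with functions `Conf L → ℂ`. -/
abbrev Conf (L : ℕ) := Fin L → Fin 2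

def S1 : Matrix (Fin 2) (Fin 2) ℂ := !![0, 1/2; 1/2, 0]
def S2 : Matrix (Fin 2) (Fin 2) ℂ := !![0, -Complex.I/2; Complex.I/2, 0]
def S3 : Matrix (Fin 2) (Fin 2) ℂ := !![1/2, 0; 0, -1/2]

/-- The one-site operator `A` acting on the `x`-th (0-based) tensor factor of `ℋ_L`. -/
def siteOp (L : ℕ) (A : Matrix (Fin 2) (Fin 2) ℂ) (x : ℕ) :
    Matrix (Conf L) (Conf L) ℂ :=
  fun m n =>
    if hx : x < L then
      A (m ⟨x, hx⟩) (n ⟨x, hx⟩) *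
        ∏ y ∈ Finset.univ.erase (⟨x, hx⟩ : Fin L), (if m y = n y then 1 else 0)
    else 0

def q (Δ : ℝ) : ℝ := Δ - Real.sqrt (Δ ^ 2 - 1)

/-- The bond interaction `h_{x,x+1}` (with `x` 0-based). -/
def hBond (L : ℕ) (Δ : ℝ) (x : ℕ) : Matrix (Conf L) (Conf L) ℂ :=
  (-(Δ⁻¹ : ℝ) : ℂ) • (siteOp L S1 x * siteOp L S1 (x + 1) + siteOp L S2 x * siteOp L S2 (x + 1))
    - siteOp L S3 x * siteOp L S3 (x + 1)
    + ((1 / 2 * Real.sqrt (1 - Δ⁻¹ ^ 2) : ℝ) : ℂ) • (siteOp L S3 x - siteOp L S3 (x + 1))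
    + ((1 / 4 : ℝ) : ℂ) • 1

/-- The XXZ kink Hamiltonian `H_0 = ∑_{x=1}^{L-1} h_{x,x+1}`. -/
def H0 (L : ℕ) (Δ : ℝ) : Matrix (Conf L) (Conf L) ℂ :=
  ∑ x ∈ Finset.range (L - 1), hBond L Δ x

/-- The kink state `φ_c` (0-based site `x` corresponds to the paper's site `x+1`). -/
def kink (L : ℕ) (Δ : ℝ) (c : ℂ) : Conf L → ℂ :=
  fun m => ∏ x : Fin L,
    (((1 + ‖c‖ ^ 2 * q Δ ^ (2 * (x.1 + 1))) ^ (-(1 / 2 : ℝ)) : ℝ) : ℂ) *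
      (if m x = 0 then 1 else c * (q Δ : ℂ) ^ (x.1 + 1))

/-- The set of (real) eigenvalues of a matrix. -/
def eigSet {n : Type*} [Fintype n] [DecidableEq n] (H : Matrix n n ℂ) : Set ℝ :=
  {μ : ℝ | ∃ ψ : n → ℂ, ψ ≠ 0 ∧ H.mulVec ψ = (μ : ℂ) • ψ}

/-- Euclidean norm of `𝐁(x) ∈ ℝ³`. -/
def bnorm (b : Fin 3 → ℝ) : ℝ := Real.sqrt (b 0 ^ 2 + b 1 ^ 2 + b 2 ^ 2)

/-- The magnetic field term `𝐁(x)·𝐒_x` at (0-based) site `x`. -/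
def fieldOp (L : ℕ) (b : Fin 3 → ℝ) (x : ℕ) : Matrix (Conf L) (Conf L) ℂ :=
  (b 0 : ℂ) • siteOp L S1 x + (b 1 : ℂ) • siteOp L S2 x + (b 2 : ℂ) • siteOp L S3 x

lemma siteOp_isHermitian (L : ℕ) (A : Matrix (Fin 2) (Fin 2) ℂ) (x : ℕ)
    (hA : A.IsHermitian) : (siteOp L A x).IsHermitian := by
  ext m n
  simp only [conjTranspose_apply, siteOp]
  split_ifs with hx
  · rw [star_mul', star_prod]
    congr 1
    · rw [← Matrix.conjTranspose_apply, hA]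
    · refine Finset.prod_congr rfl fun y _ => ?_
      simp [apply_ite (star : ℂ → ℂ), eq_comm]
  · simp

lemma siteOp_mul_apply (L : ℕ) (A B : Matrix (Fin 2) (Fin 2) ℂ) {x y : ℕ}
    (hx : x < L) (hy : y < L) (hxy : x ≠ y) (m n : Conf L) :
    (siteOp L A x * siteOp L B y) m n =
      A (m ⟨x, hx⟩) (n ⟨x, hx⟩) * B (m ⟨y, hy⟩) (n ⟨y, hy⟩) *
        ∏ z ∈ (Finset.univ.erase (⟨x, hx⟩ : Fin L)).erase ⟨y, hy⟩,
          (if m z = n z then 1 else 0) := by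
  set x' : Fin L := ⟨x, hx⟩ with hxdef
  set y' : Fin L := ⟨y, hy⟩ with hydef
  have hxy' : x' ≠ y' := fun h => hxy (congrArg Fin.val h)
  have hyx' : y' ≠ x' := Ne.symm hxy'
  rw [Matrix.mul_apply]
  rw [Finset.sum_eq_single (Function.update m x' (n x'))]
  · simp only [siteOp, dif_pos hx, dif_pos hy]
    have h1 : ∀ z ∈ Finset.univ.erase x',
        (if m z = Function.update m x' (n x') z then (1:ℂ) else 0) = 1 := by
      intro z hz
      rw [Function.update_of_ne (Finset.ne_of_mem_erase hz)]
      simp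
    have hxmem : x' ∈ Finset.univ.erase y' := by simp [hxy']
    have h2 : ∀ z ∈ (Finset.univ.erase y').erase x',
        (if Function.update m x' (n x') z = n z then (1:ℂ) else 0)
          = if m z = n z then 1 else 0 := by
      intro z hz
      rw [Function.update_of_ne (Finset.ne_of_mem_erase hz)]
    rw [Finset.prod_congr rfl h1, Finset.prod_const_one, mul_one,
      ← Finset.mul_prod_erase _ _ hxmem, Finset.prod_congr rfl h2, Finset.erase_right_comm]
    simp only [← hxdef, ← hydef, Function.update_self, Function.update_of_ne hyx', eq_self_iff_true, if_true, mul_one]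
    ring
  · intro k _ hk
    have hex : ∃ z, k z ≠ Function.update m x' (n x') z := by
      by_contra h
      push_neg at h
      exact hk (funext h)
    obtain ⟨z, hz⟩ := hex
    by_cases hzx : z = x'
    · have hz' : k x' ≠ n x' := by
        rw [hzx, Function.update_self] at hz; exact hz
      have hprod : (∏ w ∈ Finset.univ.erase y', (if k w = n w then (1:ℂ) else 0)) = 0 :=
        Finset.prod_eq_zero (show x' ∈ Finset.univ.erase y' by simp [hxy']) (if_neg hz')
      have hB : siteOp L B y k n = 0 := by
        simp only [siteOp, dif_pos hy, ← hydef]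
        rw [hprod, mul_zero]
      rw [hB, mul_zero]
    · rw [Function.update_of_ne hzx] at hz
      have hprod : (∏ w ∈ Finset.univ.erase x', (if m w = k w then (1:ℂ) else 0)) = 0 :=
        Finset.prod_eq_zero (show z ∈ Finset.univ.erase x' by simp [hzx])
          (if_neg (fun h => hz h.symm))
      have hA0 : siteOp L A x m k = 0 := by
        simp only [siteOp, dif_pos hx, ← hxdef]
        rw [hprod, mul_zero]
      rw [hA0, zero_mul]
  · intro h
    exact absurd (Finset.mem_univ _) h

lemma siteOp_zero_of_ge (L : ℕ) (A : Matrix (Fin 2) (Fin 2) ℂ) {x : ℕ} (hx : ¬ x < L) :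
    siteOp L A x = 0 := by
  ext m n; simp [siteOp, hx]

lemma siteOp_mul_comm (L : ℕ) (A B : Matrix (Fin 2) (Fin 2) ℂ) {x y : ℕ}
    (hxy : x ≠ y) :
    siteOp L A x * siteOp L B y = siteOp L B y * siteOp L A x := by
  by_cases hx : x < L
  · by_cases hy : y < L
    · ext m n
      rw [siteOp_mul_apply L A B hx hy hxy, siteOp_mul_apply L B A hy hx (Ne.symm hxy),
        Finset.erase_right_comm]
      ring
    · rw [siteOp_zero_of_ge L B hy, mul_zero, zero_mul]
  · rw [siteOp_zero_of_ge L A hx, mul_zero, zero_mul]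

lemma siteOp_neg (L : ℕ) (A : Matrix (Fin 2) (Fin 2) ℂ) (x : ℕ) :
    siteOp L (-A) x = -(siteOp L A x) := by
  ext m n
  simp only [siteOp, Matrix.neg_apply]
  split_ifs with hx
  · ring
  · simp

lemma S1_herm : S1.IsHermitian := by
  ext i j
  fin_cases i <;> fin_cases j <;> simp [S1, Matrix.conjTranspose_apply]

lemma S2_herm : S2.IsHermitian := by
  ext i j
  fin_cases i <;> fin_cases j <;>
    simp [S2, Matrix.conjTranspose_apply, div_eq_mul_inv, Complex.ext_iff]

lemma S3_herm : S3.IsHermitian := by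
  ext i j
  fin_cases i <;> fin_cases j <;> simp [S3, Matrix.conjTranspose_apply, Complex.ext_iff]

lemma siteOp_pair_herm (L : ℕ) {A B : Matrix (Fin 2) (Fin 2) ℂ} {x y : ℕ}
    (hA : A.IsHermitian) (hB : B.IsHermitian) (hxy : x ≠ y) :
    (siteOp L A x * siteOp L B y).IsHermitian := by
  unfold Matrix.IsHermitian
  rw [Matrix.conjTranspose_mul, siteOp_isHermitian L B y hB, siteOp_isHermitian L A x hA,
    siteOp_mul_comm L B A (Ne.symm hxy)]

lemma smul_herm {n : Type*} [Fintype n] [DecidableEq n] {M : Matrix n n ℂ}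
    (hM : M.IsHermitian) {z : ℂ} (hz : star z = z) : (z • M).IsHermitian := by
  unfold Matrix.IsHermitian
  rw [Matrix.conjTranspose_smul, hM, hz]

lemma realSmul_herm {n : Type*} [Fintype n] [DecidableEq n] {M : Matrix n n ℂ}
    (hM : M.IsHermitian) (c : ℝ) : (((c : ℂ)) • M).IsHermitian :=
  smul_herm hM (by rw [Complex.star_def, Complex.conj_ofReal])

lemma hBond_herm (L : ℕ) (Δ : ℝ) (x : ℕ) : (hBond L Δ x).IsHermitian := by
  have hne : x ≠ x + 1 := by omega
  refine Matrix.IsHermitian.add (Matrix.IsHermitian.add (Matrix.IsHermitian.sub ?_ ?_) ?_) ?_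
  · exact smul_herm (Matrix.IsHermitian.add
      (siteOp_pair_herm L S1_herm S1_herm hne) (siteOp_pair_herm L S2_herm S2_herm hne))
      (by simp [Complex.star_def, Complex.conj_ofReal])
  · exact siteOp_pair_herm L S3_herm S3_herm hne
  · exact realSmul_herm (Matrix.IsHermitian.sub
      (siteOp_isHermitian L S3 x S3_herm) (siteOp_isHermitian L S3 (x+1) S3_herm)) _
  · exact realSmul_herm Matrix.isHermitian_one _

lemma H0_herm (L : ℕ) (Δ : ℝ) : (H0 L Δ).IsHermitian := by
  unfold H0 Matrix.IsHermitian
  rw [Matrix.conjTranspose_sum]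
  exact Finset.sum_congr rfl fun x _ => hBond_herm L Δ x

lemma Ht_herm (L : ℕ) (Δ : ℝ) (c₁ c₂ : ℝ) :
    (H0 L Δ - ((c₁ : ℝ) : ℂ) • siteOp L S1 (L / 2 - 1)
      - ((c₂ : ℝ) : ℂ) • siteOp L S1 (L / 2)).IsHermitian :=
  Matrix.IsHermitian.sub
    (Matrix.IsHermitian.sub (H0_herm L Δ)
      (realSmul_herm (siteOp_isHermitian L S1 _ S1_herm) _))
    (realSmul_herm (siteOp_isHermitian L S1 _ S1_herm) _)

/-- Spin-flip plus chain-reflection on configurations. -/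
def confRefl (L : ℕ) : Conf L ≃ Conf L where
  toFun m := fun i => (m i.rev).rev
  invFun m := fun i => (m i.rev).rev
  left_inv m := by funext i; simp [Fin.rev_rev]
  right_inv m := by funext i; simp [Fin.rev_rev]

lemma submatrix_siteOp (L : ℕ) (A : Matrix (Fin 2) (Fin 2) ℂ) {x : ℕ} (hx : x < L) :
    (siteOp L A x).submatrix (confRefl L) (confRefl L)
      = siteOp L (A.submatrix Fin.rev Fin.rev) (L - 1 - x) := by
  have hx' : L - 1 - x < L := by omega
  ext m n
  rw [Matrix.submatrix_apply]
  simp only [siteOp, dif_pos hx, dif_pos hx']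
  have hrev : (⟨L - 1 - x, hx'⟩ : Fin L) = (⟨x, hx⟩ : Fin L).rev := by
    ext; simp [Fin.val_rev]; omega
  rw [hrev]
  have h1 : confRefl L m (⟨x, hx⟩ : Fin L) = (m (⟨x, hx⟩ : Fin L).rev).rev := rfl
  have h2 : confRefl L n (⟨x, hx⟩ : Fin L) = (n (⟨x, hx⟩ : Fin L).rev).rev := rfl
  rw [h1, h2]
  have hprod : (∏ y ∈ Finset.univ.erase (⟨x, hx⟩ : Fin L),
        (if confRefl L m y = confRefl L n y then (1:ℂ) else 0))
      = ∏ y ∈ Finset.univ.erase ((⟨x, hx⟩ : Fin L).rev), (if m y = n y then (1:ℂ) else 0) := by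
    refine Finset.prod_bij' (fun y _ => y.rev) (fun y _ => y.rev) ?_ ?_ ?_ ?_ ?_
    · intro a ha
      simp only [Finset.mem_erase, Finset.mem_univ, and_true] at ha ⊢
      simpa [Fin.rev_inj] using ha
    · intro a ha
      simp only [Finset.mem_erase, Finset.mem_univ, and_true] at ha ⊢
      intro h
      exact ha (by rw [← h, Fin.rev_rev])
    · intro a _; exact Fin.rev_rev a
    · intro a _; exact Fin.rev_rev a
    · intro a _
      show (if (m a.rev).rev = (n a.rev).rev then (1:ℂ) else 0) = _
      simp [Fin.rev_inj]
  rw [hprod, Matrix.submatrix_apply]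

lemma S1_rev : S1.submatrix (Fin.rev : Fin 2 → Fin 2) Fin.rev = S1 := by
  ext i j
  fin_cases i <;> fin_cases j <;>
    simp [S1, Matrix.submatrix_apply, show (Fin.rev 0 : Fin 2) = 1 from rfl,
      show (Fin.rev 1 : Fin 2) = 0 from rfl]

lemma S2_rev : S2.submatrix (Fin.rev : Fin 2 → Fin 2) Fin.rev = -S2 := by
  ext i j
  fin_cases i <;> fin_cases j <;>
    simp [S2, Matrix.submatrix_apply, show (Fin.rev 0 : Fin 2) = 1 from rfl,
      show (Fin.rev 1 : Fin 2) = 0 from rfl] <;> ring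

lemma S3_rev : S3.submatrix (Fin.rev : Fin 2 → Fin 2) Fin.rev = -S3 := by
  ext i j
  fin_cases i <;> fin_cases j <;>
    simp [S3, Matrix.submatrix_apply, show (Fin.rev 0 : Fin 2) = 1 from rfl,
      show (Fin.rev 1 : Fin 2) = 0 from rfl] <;> ring

lemma eigenvalues_mem_eigSet {n : Type*} [Fintype n] [DecidableEq n]
    {H : Matrix n n ℂ} (hH : H.IsHermitian) (i : n) :
    hH.eigenvalues i ∈ eigSet H := by
  refine ⟨⇑(hH.eigenvectorBasis i), ?_, ?_⟩
  · intro h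
    exact hH.eigenvectorBasis.orthonormal.ne_zero i (by
      ext j
      simpa using congrFun h j)
  · rw [hH.mulVec_eigenvectorBasis i]
    ext j
    simp [Complex.real_smul]

lemma rayleigh_lower {n : Type*} [Fintype n] [DecidableEq n]
    {H : Matrix n n ℂ} (hH : H.IsHermitian) {E : ℝ}
    (hE : E ∈ lowerBounds (eigSet H)) (ψ : n → ℂ) :
    E * (star ψ ⬝ᵥ ψ).re ≤ (star ψ ⬝ᵥ H.mulVec ψ).re := by
  set U : Matrix n n ℂ := ↑(hH.eigenvectorUnitary) with hU
  have hUU : U * star U = 1 := Matrix.mem_unitaryGroup_iff.mp hH.eigenvectorUnitary.2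
  set φ : n → ℂ := star U *ᵥ ψ with hφ
  have key : star ψ ᵥ* U = star φ := by
    rw [hφ, Matrix.star_mulVec]
    simp [Matrix.star_eq_conjTranspose, Matrix.conjTranspose_conjTranspose]
  have hdot : star ψ ⬝ᵥ H.mulVec ψ
      = star φ ⬝ᵥ (Matrix.diagonal (RCLike.ofReal ∘ hH.eigenvalues)) *ᵥ φ := by
    conv_lhs => rw [hH.spectral_theorem, Unitary.conjStarAlgAut_apply]
    rw [← hU]
    rw [← Matrix.mulVec_mulVec, ← Matrix.mulVec_mulVec, Matrix.dotProduct_mulVec, key]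
  have hnorm : star ψ ⬝ᵥ ψ = star φ ⬝ᵥ φ := by
    rw [hφ, Matrix.star_mulVec, Matrix.dotProduct_mulVec, Matrix.vecMul_vecMul]
    simp only [Matrix.star_eq_conjTranspose, Matrix.conjTranspose_conjTranspose]
    rw [show U * Uᴴ = (1 : Matrix n n ℂ) from hUU, Matrix.vecMul_one]
  rw [hdot, hnorm]
  have hdiag : (star φ ⬝ᵥ (Matrix.diagonal (RCLike.ofReal ∘ hH.eigenvalues)) *ᵥ φ).re
      = ∑ i, hH.eigenvalues i * Complex.normSq (φ i) := by
    rw [dotProduct, Complex.re_sum]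
    refine Finset.sum_congr rfl fun i _ => ?_
    rw [Matrix.mulVec_diagonal]
    simp only [Pi.star_apply, Function.comp]
    simp [Complex.star_def, Complex.mul_re, Complex.mul_im, Complex.conj_re,
      Complex.conj_im, Complex.normSq_apply]
    ring
  have hnorm2 : (star φ ⬝ᵥ φ).re = ∑ i, Complex.normSq (φ i) := by
    rw [dotProduct, Complex.re_sum]
    refine Finset.sum_congr rfl fun i _ => ?_
    simp only [Pi.star_apply, Complex.star_def, Complex.mul_re, Complex.conj_re,
      Complex.conj_im, Complex.normSq_apply]
    ring
  rw [hdiag, hnorm2, Finset.mul_sum]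
  refine Finset.sum_le_sum fun i _ => ?_
  exact mul_le_mul_of_nonneg_right (hE (eigenvalues_mem_eigSet hH i)) (Complex.normSq_nonneg _)

lemma submatrix_mul_refl (L : ℕ) (M N : Matrix (Conf L) (Conf L) ℂ) :
    (M * N).submatrix (confRefl L) (confRefl L)
      = M.submatrix (confRefl L) (confRefl L) * N.submatrix (confRefl L) (confRefl L) :=
  (Matrix.submatrix_mul_equiv M N _ (confRefl L) _).symm

lemma subm_add (L : ℕ) (M N : Matrix (Conf L) (Conf L) ℂ) :
    (M + N).submatrix (confRefl L) (confRefl L)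
      = M.submatrix (confRefl L) (confRefl L) + N.submatrix (confRefl L) (confRefl L) := rfl

lemma subm_sub (L : ℕ) (M N : Matrix (Conf L) (Conf L) ℂ) :
    (M - N).submatrix (confRefl L) (confRefl L)
      = M.submatrix (confRefl L) (confRefl L) - N.submatrix (confRefl L) (confRefl L) := rfl

lemma subm_smul (L : ℕ) (c : ℂ) (M : Matrix (Conf L) (Conf L) ℂ) :
    (c • M).submatrix (confRefl L) (confRefl L)
      = c • M.submatrix (confRefl L) (confRefl L) := rfl

lemma submatrix_hBond (L : ℕ) (Δ : ℝ) {x : ℕ} (hx : x + 1 < L) :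
    (hBond L Δ x).submatrix (confRefl L) (confRefl L) = hBond L Δ (L - 2 - x) := by
  have hx0 : x < L := by omega
  have e1 : L - 1 - x = (L - 2 - x) + 1 := by omega
  have e2 : L - 1 - (x + 1) = L - 2 - x := by omega
  unfold hBond
  simp only [subm_add, subm_sub, subm_smul, submatrix_mul_refl,
    Matrix.submatrix_one_equiv (confRefl L),
    submatrix_siteOp L S1 hx0, submatrix_siteOp L S1 hx,
    submatrix_siteOp L S2 hx0, submatrix_siteOp L S2 hx,
    submatrix_siteOp L S3 hx0, submatrix_siteOp L S3 hx,
    S1_rev, S2_rev, S3_rev, siteOp_neg, e1, e2]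
  rw [neg_mul_neg, neg_mul_neg,
    siteOp_mul_comm L S2 S2 (by omega : (L-2-x)+1 ≠ L-2-x),
    siteOp_mul_comm L S3 S3 (by omega : (L-2-x)+1 ≠ L-2-x),
    show ∀ (A A' : Matrix (Conf L) (Conf L) ℂ), -A' - -A = A - A' from fun A A' => by abel,
    siteOp_mul_comm L S1 S1 (by omega : (L-2-x)+1 ≠ L-2-x)]

lemma submatrix_H0 (L : ℕ) (Δ : ℝ) :
    (H0 L Δ).submatrix (confRefl L) (confRefl L) = H0 L Δ := by
  unfold H0
  have hsum : (∑ x ∈ Finset.range (L - 1), hBond L Δ x).submatrix (confRefl L) (confRefl L)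
      = ∑ x ∈ Finset.range (L - 1), (hBond L Δ x).submatrix (confRefl L) (confRefl L) := by
    ext m n
    simp [Matrix.submatrix_apply, Matrix.sum_apply]
  rw [hsum]
  rw [Finset.sum_congr rfl fun x hx => submatrix_hBond L Δ
    (by have := Finset.mem_range.mp hx; omega : x + 1 < L)]
  calc ∑ x ∈ Finset.range (L - 1), hBond L Δ (L - 2 - x)
      = ∑ x ∈ Finset.range (L - 1), hBond L Δ (L - 1 - 1 - x) :=
        Finset.sum_congr rfl fun x _ => by rw [show L - 2 - x = L - 1 - 1 - x by omega]
    _ = ∑ x ∈ Finset.range (L - 1), hBond L Δ x := Finset.sum_range_reflect _ _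

lemma eigSet_submatrix_subset {n : Type*} [Fintype n] [DecidableEq n]
    (M : Matrix n n ℂ) (e : n ≃ n) :
    eigSet (M.submatrix e e) ⊆ eigSet M := by
  rintro μ ⟨ψ, hψ, hEig⟩
  refine ⟨ψ ∘ e.symm, ?_, ?_⟩
  · intro h
    apply hψ
    funext i
    have := congrFun h (e i)
    simpa using this
  · rw [Matrix.submatrix_mulVec_equiv] at hEig
    funext i
    have := congrFun hEig (e.symm i)
    simpa using this

lemma eigSet_submatrix {n : Type*} [Fintype n] [DecidableEq n]
    (M : Matrix n n ℂ) (e : n ≃ n) :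
    eigSet (M.submatrix e e) = eigSet M := by
  refine Set.Subset.antisymm (eigSet_submatrix_subset M e) ?_
  have h2 := eigSet_submatrix_subset (M.submatrix e e) e.symm
  rwa [Matrix.submatrix_submatrix, Equiv.self_comp_symm, Matrix.submatrix_id_id] at h2

def HtM (L : ℕ) (Δ B v : ℝ) (r : ℝ) : Matrix (Conf L) (Conf L) ℂ :=
  H0 L Δ - (((1 - v * r) * B : ℝ) : ℂ) • siteOp L S1 (L / 2 - 1)
    - ((v * r * B : ℝ) : ℂ) • siteOp L S1 (L / 2)

lemma HtM_herm (L : ℕ) (Δ B v r : ℝ) : (HtM L Δ B v r).IsHermitian :=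
  Ht_herm L Δ ((1 - v * r) * B) (v * r * B)

lemma HtM_refl (L : ℕ) (hL : 2 ≤ L) (hLeven : Even L) (Δ B v : ℝ) (hv : v ≠ 0) (t : ℝ) :
    (HtM L Δ B v t).submatrix (confRefl L) (confRefl L) = HtM L Δ B v (1 / v - t) := by
  obtain ⟨k, hk⟩ := hLeven
  have hhalf : L / 2 = k := by omega
  have h1 : L / 2 - 1 < L := by omega
  have h2 : L / 2 < L := by omega
  have e1 : L - 1 - (L / 2 - 1) = L / 2 := by omega
  have e2 : L - 1 - (L / 2) = L / 2 - 1 := by omega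
  have c1 : ((1 - v * (1 / v - t)) * B : ℝ) = v * t * B := by field_simp; ring
  have c2 : (v * (1 / v - t) * B : ℝ) = (1 - v * t) * B := by field_simp
  unfold HtM
  rw [subm_sub, subm_sub, subm_smul, subm_smul, submatrix_H0,
    submatrix_siteOp L S1 h1, submatrix_siteOp L S1 h2, S1_rev, e1, e2, c1, c2,
    sub_right_comm]

/-- for even `L`, `x₀ = L/2`, and
`H(t) = H_0 − (1−vt)B S¹_{x₀} − vt B S¹_{x₀+1}` (0-based site indices `L/2 - 1, L/2`),
the lowest eigenvalue `E₀` attains its maximum over `[0, 1/v]` at the half period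
`t = 1/(2v)`. -/
theorem ground_energy_max_at_half_period
    (L : ℕ) (hL : 2 ≤ L) (hLeven : Even L) (Δ : ℝ) (hΔ : 1 < Δ)
    (B v : ℝ) (hB : 0 < B) (hv : 0 < v)
    (E₀ : ℝ → ℝ)
    (hE₀ : ∀ t ∈ Set.Icc (0 : ℝ) (1 / v),
      IsLeast (eigSet (H0 L Δ
        - (((1 - v * t) * B : ℝ) : ℂ) • siteOp L S1 (L / 2 - 1)
        - ((v * t * B : ℝ) : ℂ) • siteOp L S1 (L / 2))) (E₀ t)) :
    IsMaxOn E₀ (Set.Icc 0 (1 / v)) (1 / (2 * v)) := by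
  have hvne : v ≠ 0 := ne_of_gt hv
  have hE : ∀ r ∈ Set.Icc (0 : ℝ) (1 / v), IsLeast (eigSet (HtM L Δ B v r)) (E₀ r) := hE₀
  have hvpos : 0 < 1 / v := by positivity
  have hmid : (1 / (2 * v)) ∈ Set.Icc (0 : ℝ) (1 / v) := by
    constructor
    · positivity
    · rw [show 1 / (2 * v) = (1 / v) / 2 by ring]
      linarith
  rw [isMaxOn_iff]
  intro t ht
  set s : ℝ := 1 / v - t with hsdef
  have hs : s ∈ Set.Icc (0 : ℝ) (1 / v) := by
    constructor
    · have := ht.2; simp only [hsdef]; linarith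
    · have := ht.1; simp only [hsdef]; linarith
  -- symmetry: E₀ s = E₀ t
  have hsym : E₀ s = E₀ t := by
    have heq : eigSet (HtM L Δ B v s) = eigSet (HtM L Δ B v t) := by
      rw [hsdef, ← HtM_refl L hL hLeven Δ B v hvne t,
        eigSet_submatrix (HtM L Δ B v t) (confRefl L)]
    exact IsLeast.unique (hE s hs) (heq ▸ hE t ht)
  -- ground eigenvector at the midpoint
  obtain ⟨ψ, hψ0, hψ⟩ := (hE _ hmid).1
  -- norm
  have hN : (star ψ ⬝ᵥ ψ).re = ∑ i, Complex.normSq (ψ i) := by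
    rw [dotProduct, Complex.re_sum]
    refine Finset.sum_congr rfl fun i _ => ?_
    simp only [Pi.star_apply, Complex.star_def, Complex.mul_re, Complex.conj_re,
      Complex.conj_im, Complex.normSq_apply]
    ring
  have hNpos : 0 < (star ψ ⬝ᵥ ψ).re := by
    rw [hN]
    obtain ⟨i, hi⟩ := Function.ne_iff.mp hψ0
    exact Finset.sum_pos' (fun j _ => Complex.normSq_nonneg _)
      ⟨i, Finset.mem_univ i, Complex.normSq_pos.mpr hi⟩
  -- dot product expansion
  have hdot : ∀ r : ℝ, star ψ ⬝ᵥ (HtM L Δ B v r).mulVec ψ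
      = star ψ ⬝ᵥ (H0 L Δ).mulVec ψ
        - (((1 - v * r) * B : ℝ) : ℂ) * (star ψ ⬝ᵥ (siteOp L S1 (L / 2 - 1)).mulVec ψ)
        - ((v * r * B : ℝ) : ℂ) * (star ψ ⬝ᵥ (siteOp L S1 (L / 2)).mulVec ψ) := by
    intro r
    unfold HtM
    rw [Matrix.sub_mulVec, Matrix.sub_mulVec, Matrix.smul_mulVec,
      Matrix.smul_mulVec, dotProduct_sub, dotProduct_sub,
      dotProduct_smul, dotProduct_smul, smul_eq_mul, smul_eq_mul]
  -- midpoint value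
  have hmidval : (star ψ ⬝ᵥ (HtM L Δ B v (1 / (2 * v))).mulVec ψ).re
      = E₀ (1 / (2 * v)) * (star ψ ⬝ᵥ ψ).re := by
    rw [show (HtM L Δ B v (1 / (2 * v))).mulVec ψ = ((E₀ (1 / (2 * v)) : ℝ) : ℂ) • ψ from hψ,
      dotProduct_smul, smul_eq_mul, Complex.re_ofReal_mul]
  -- affine combination identity
  have hsumc : (star ψ ⬝ᵥ (HtM L Δ B v t).mulVec ψ) + (star ψ ⬝ᵥ (HtM L Δ B v s).mulVec ψ)
      = 2 * (star ψ ⬝ᵥ (HtM L Δ B v (1 / (2 * v))).mulVec ψ) := by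
    rw [hdot t, hdot s, hdot (1 / (2 * v)), hsdef]
    have c1 : ((1 - v * (1 / v - t)) * B : ℝ) = (1 - (1 - v * t)) * B := by field_simp
    have c2 : (v * (1 / v - t) * B : ℝ) = (1 - v * t) * B := by field_simp
    have c3 : ((1 - v * (1 / (2 * v))) * B : ℝ) = (1 / 2) * B := by field_simp; ring
    have c4 : (v * (1 / (2 * v)) * B : ℝ) = (1 / 2) * B := by field_simp
    rw [c1, c2, c3, c4]
    push_cast
    ring
  -- Rayleigh bounds
  have hrayt : E₀ t * (star ψ ⬝ᵥ ψ).re ≤ (star ψ ⬝ᵥ (HtM L Δ B v t).mulVec ψ).re :=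
    rayleigh_lower (HtM_herm L Δ B v t) (hE t ht).2 ψ
  have hrays : E₀ s * (star ψ ⬝ᵥ ψ).re ≤ (star ψ ⬝ᵥ (HtM L Δ B v s).mulVec ψ).re :=
    rayleigh_lower (HtM_herm L Δ B v s) (hE s hs).2 ψ
  have hre : (star ψ ⬝ᵥ (HtM L Δ B v t).mulVec ψ).re
      + (star ψ ⬝ᵥ (HtM L Δ B v s).mulVec ψ).re
      = 2 * (E₀ (1 / (2 * v)) * (star ψ ⬝ᵥ ψ).re) := by
    have := congrArg Complex.re hsumc
    rw [Complex.add_re] at this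
    rw [this, show ((2 : ℂ) * (star ψ ⬝ᵥ (HtM L Δ B v (1 / (2 * v))).mulVec ψ)).re
      = 2 * (star ψ ⬝ᵥ (HtM L Δ B v (1 / (2 * v))).mulVec ψ).re by
        rw [show (2 : ℂ) = ((2 : ℝ) : ℂ) by norm_num, Complex.re_ofReal_mul], hmidval]
  rw [hsym] at hrays
  nlinarith [hNpos, hrayt, hrays, hre]
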